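/- The functions u₁(t) = (1 - e^{-t} + te^{-t/2})/(1 + e^{-t/2}) and u₂(t) = (1 - e^{-t} - te^{-t/2})/(1 - e^{-t/2}) (with u₂(0) := 0) are both positive for all t > 0, and satisfy the asymptotics u₁(t) = t + O(t²) and u₂(t) = t²/12 + O(t³) as t → 0, and u₁(t) → 1, u₂(t) → 1 as t → +∞. -/

import Mathlib

open Filter Asymptotics Topology

-- degree-4 Taylor bound for exp
lemma exp_taylor4 {x : ℝ} (hx : |x| ≤ 1) :
    |Real.exp x - (1 + x + x^2/2 + x^3/6 + x^4/24)| ≤ |x|^5 / 100 := by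
  have h := Real.exp_bound hx (n := 5) (by norm_num)
  have hs : (∑ m ∈ Finset.range 5, x ^ m / m.factorial)
      = 1 + x + x^2/2 + x^3/6 + x^4/24 := by
    norm_num [Finset.sum_range_succ, Nat.factorial]
  rw [hs] at h
  calc |Real.exp x - (1 + x + x^2/2 + x^3/6 + x^4/24)| ≤ |x|^5 * ((5:ℕ).succ / ((5:ℕ).factorial * 5)) := h
    _ ≤ |x|^5/100 := by
        have : ((5:ℕ).succ / ((5:ℕ).factorial * 5) : ℝ) = 1/100 := by norm_num [Nat.factorial]
        rw [this]; ring_nf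
        rfl

lemma exp_pos_lt_one {t : ℝ} (ht : 0 < t) : Real.exp (-t) < 1 := by
  rw [Real.exp_lt_one_iff]; linarith

-- numerator of u₂ positive
lemma num2_pos {t : ℝ} (ht : 0 < t) :
    0 < 1 - Real.exp (-t) - t * Real.exp (-t/2) := by
  have h := (Real.self_lt_sinh_iff (x := t/2)).2 (by linarith)
  rw [Real.sinh_eq] at h
  have h1 : Real.exp (-(t/2)) * Real.exp (t/2) = 1 := by
    rw [← Real.exp_add]; norm_num
  have h2 : Real.exp (-(t/2)) * Real.exp (-(t/2)) = Real.exp (-t) := by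
    rw [← Real.exp_add]; ring_nf
  have he : (0:ℝ) < Real.exp (-(t/2)) := Real.exp_pos _
  have hq : -t/2 = -(t/2) := by ring
  rw [show (-t/2 : ℝ) = -(t/2) by ring]
  nlinarith [mul_lt_mul_of_pos_left h he]

set_option maxHeartbeats 1000000 in
lemma u2_key {t : ℝ} (h0 : 0 < t) (h1 : t ≤ 1) :
    |(1 - Real.exp (-t) - t * Real.exp (-t/2)) / (1 - Real.exp (-t/2)) - t^2/12|
      ≤ 6 * t^3 := by
  have habs : |(-t : ℝ)| ≤ 1 := by rw [abs_neg, abs_of_pos h0]; exact h1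
  have habs2 : |(-t/2 : ℝ)| ≤ 1 := by
    rw [abs_div, abs_neg, abs_of_pos h0]
    rw [abs_of_pos (by norm_num : (0:ℝ) < 2)]; linarith
  have ht54 : t^5 ≤ t^4 := by
    nlinarith [mul_le_mul_of_nonneg_left h1 (pow_nonneg h0.le 4)]
  have ht64 : t^6 ≤ t^4 := by
    nlinarith [mul_le_mul_of_nonneg_left h1 (pow_nonneg h0.le 5),
      mul_le_mul_of_nonneg_left h1 (pow_nonneg h0.le 4)]
  have ha : |Real.exp (-t) - (1 - t + t^2/2 - t^3/6 + t^4/24)| ≤ t^5/100 := by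
    have h := exp_taylor4 habs
    rw [show (1 + (-t) + (-t)^2/2 + (-t)^3/6 + (-t)^4/24 : ℝ)
      = 1 - t + t^2/2 - t^3/6 + t^4/24 by ring] at h
    rw [abs_neg, abs_of_pos h0] at h
    exact h
  have hb : |Real.exp (-t/2) - (1 - t/2 + t^2/8 - t^3/48 + t^4/384)| ≤ t^5/100 := by
    have h := exp_taylor4 habs2
    rw [show (1 + (-t/2) + (-t/2)^2/2 + (-t/2)^3/6 + (-t/2)^4/24 : ℝ)
      = 1 - t/2 + t^2/8 - t^3/48 + t^4/384 by ring] at h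
    rw [abs_div, abs_neg, abs_of_pos h0, abs_of_pos (by norm_num : (0:ℝ) < 2)] at h
    calc |Real.exp (-t/2) - (1 - t/2 + t^2/8 - t^3/48 + t^4/384)|
        ≤ (t/2)^5/100 := h
      _ ≤ t^5/100 := by nlinarith [pow_nonneg h0.le 5]
  set e₁ := Real.exp (-t) - (1 - t + t^2/2 - t^3/6 + t^4/24) with he₁
  set e₂ := Real.exp (-t/2) - (1 - t/2 + t^2/8 - t^3/48 + t^4/384) with he₂
  have ha' := abs_le.1 ha
  have hb' := abs_le.1 hb
  have hte₂ : -(t^4/100) ≤ t * e₂ ∧ t * e₂ ≤ t^4/100 := by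
    constructor <;> nlinarith [mul_le_mul_of_nonneg_left hb'.1 h0.le,
      mul_le_mul_of_nonneg_left hb'.2 h0.le]
  have ht2e₂ : -(t^4/100) ≤ (t^2/12) * e₂ ∧ (t^2/12) * e₂ ≤ t^4/100 := by
    have h12 : (0:ℝ) ≤ t^2/12 := by positivity
    constructor <;> nlinarith [mul_le_mul_of_nonneg_left hb'.1 h12,
      mul_le_mul_of_nonneg_left hb'.2 h12]
  have hDpos : 0 < 1 - Real.exp (-t/2) := by
    have h := exp_pos_lt_one (t := t/2) (by linarith)
    rw [show (-(t/2):ℝ) = -t/2 by ring] at h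
    linarith
  have hD : t/3 ≤ 1 - Real.exp (-t/2) := by
    have := hb'.2
    rw [he₂] at this
    nlinarith
  have hMeq : 1 - Real.exp (-t) - t * Real.exp (-t/2) - t^2/12
        + (t^2/12) * Real.exp (-t/2)
      = -e₁ - t*e₂ + (t^2/12)*e₂
        + (-(t^4/96) - t^5/384 - t^5/576 + t^6/4608) := by
    rw [he₁, he₂]; ring
  have hM : |1 - Real.exp (-t) - t * Real.exp (-t/2) - t^2/12
      + (t^2/12) * Real.exp (-t/2)| ≤ t^4 := by
    rw [hMeq, abs_le]
    constructor <;> nlinarith [ha'.1, ha'.2, hte₂.1, hte₂.2, ht2e₂.1, ht2e₂.2]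
  have heq : (1 - Real.exp (-t) - t * Real.exp (-t/2))/(1 - Real.exp (-t/2)) - t^2/12
      = (1 - Real.exp (-t) - t * Real.exp (-t/2) - t^2/12
        + (t^2/12) * Real.exp (-t/2))/(1 - Real.exp (-t/2)) := by
    rw [eq_div_iff hDpos.ne', sub_mul, div_mul_cancel₀ _ hDpos.ne']
    ring
  rw [heq, abs_div, abs_of_pos hDpos, div_le_iff₀ hDpos]
  nlinarith [mul_le_mul_of_nonneg_left hD (by positivity : (0:ℝ) ≤ 6*t^3)]

lemma tend_exp_neg : Tendsto (fun t : ℝ => Real.exp (-t/2)) atTop (𝓝 0) := by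
  have h := Real.tendsto_exp_neg_atTop_nhds_zero.comp
    (tendsto_id.atTop_div_const (by norm_num : (0:ℝ) < 2))
  exact h.congr fun t => by simp only [Function.comp_apply, id]; ring_nf

lemma tend_mul_exp_neg : Tendsto (fun t : ℝ => t * Real.exp (-t/2)) atTop (𝓝 0) := by
  have h := (Real.tendsto_pow_mul_exp_neg_atTop_nhds_zero 1).comp
    (tendsto_id.atTop_div_const (by norm_num : (0:ℝ) < 2))
  have h2 := h.const_mul (2:ℝ)
  rw [mul_zero] at h2
  exact h2.congr fun t => by
    simp only [Function.comp_apply, id, pow_one]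
    rw [show (-(t/2) : ℝ) = -t/2 by ring]
    ring

/-- Positivity and asymptotics of the eigenvalue functions `u₁`, `u₂`:
both are positive on `(0,∞)`, `u₁(t) = t + O(t²)` and `u₂(t) = t²/12 + O(t³)`
as `t → 0⁺`, and both tend to `1` at `+∞`. -/
theorem stmt6 (u₁ u₂ : ℝ → ℝ)
    (hu₁ : ∀ t : ℝ, u₁ t =
      (1 - Real.exp (-t) + t * Real.exp (-t / 2)) / (1 + Real.exp (-t / 2)))
    (hu₂0 : u₂ 0 = 0)
    (hu₂ : ∀ t : ℝ, t ≠ 0 → u₂ t =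
      (1 - Real.exp (-t) - t * Real.exp (-t / 2)) / (1 - Real.exp (-t / 2))) :
    (∀ t : ℝ, 0 < t → 0 < u₁ t) ∧ (∀ t : ℝ, 0 < t → 0 < u₂ t) ∧
    (fun t => u₁ t - t) =O[𝓝[>] (0 : ℝ)] (fun t => t ^ 2) ∧
    (fun t => u₂ t - t ^ 2 / 12) =O[𝓝[>] (0 : ℝ)] (fun t => t ^ 3) ∧
    Tendsto u₁ atTop (𝓝 1) ∧ Tendsto u₂ atTop (𝓝 1) := by
  have hDpos : ∀ t : ℝ, 0 < t → 0 < 1 - Real.exp (-t/2) := fun t ht => by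
    have h := exp_pos_lt_one (t := t/2) (by linarith)
    rw [show (-(t/2):ℝ) = -t/2 by ring] at h
    linarith
  refine ⟨?_, ?_, ?_, ?_, ?_, ?_⟩
  · -- u₁ positive
    intro t ht
    rw [hu₁ t]
    apply div_pos
    · have h1 := exp_pos_lt_one ht
      have h2 := Real.exp_pos (-t/2)
      nlinarith
    · have := Real.exp_pos (-t/2); linarith
  · -- u₂ positive
    intro t ht
    rw [hu₂ t ht.ne']
    exact div_pos (num2_pos ht) (hDpos t ht)
  · -- u₁ asymptotics
    rw [isBigO_iff]
    refine ⟨1, ?_⟩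
    filter_upwards [Ioc_mem_nhdsGT_of_mem (by norm_num : (0:ℝ) ∈ Set.Ico (0:ℝ) 1)]
      with t ht
    obtain ⟨h0, h1⟩ := ht
    have hd : (0:ℝ) < 1 + Real.exp (-t/2) := by
      have := Real.exp_pos (-t/2); linarith
    have heq : u₁ t - t = (1 - Real.exp (-t) - t) / (1 + Real.exp (-t/2)) := by
      rw [hu₁ t]
      field_simp
      ring
    have hnum : |1 - Real.exp (-t) - t| ≤ t^2 := by
      have h := Real.abs_exp_sub_one_sub_id_le
        (x := -t) (by rw [abs_neg, abs_of_pos h0]; exact h1)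
      rw [show (Real.exp (-t) - 1 - (-t)) = -(1 - Real.exp (-t) - t) by ring,
        abs_neg] at h
      calc |1 - Real.exp (-t) - t| ≤ (-t)^2 := h
        _ = t^2 := by ring
    rw [heq, Real.norm_eq_abs, Real.norm_eq_abs, abs_div, abs_of_pos hd, one_mul]
    have h1d : (1:ℝ) ≤ 1 + Real.exp (-t/2) := by
      have := Real.exp_pos (-t/2); linarith
    calc |1 - Real.exp (-t) - t| / (1 + Real.exp (-t/2))
        ≤ |1 - Real.exp (-t) - t| / 1 := by
          apply div_le_div_of_nonneg_left (abs_nonneg _) one_pos h1d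
      _ = |1 - Real.exp (-t) - t| := div_one _
      _ ≤ t^2 := hnum
      _ ≤ |t^2| := le_abs_self _
  · -- u₂ asymptotics
    rw [isBigO_iff]
    refine ⟨6, ?_⟩
    filter_upwards [Ioc_mem_nhdsGT_of_mem (by norm_num : (0:ℝ) ∈ Set.Ico (0:ℝ) 1)]
      with t ht
    obtain ⟨h0, h1⟩ := ht
    rw [hu₂ t h0.ne', Real.norm_eq_abs, Real.norm_eq_abs]
    calc |(1 - Real.exp (-t) - t * Real.exp (-t/2)) / (1 - Real.exp (-t/2)) - t^2/12|
        ≤ 6 * t^3 := u2_key h0 h1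
      _ ≤ 6 * |t^3| := by
          have := le_abs_self (t^3); nlinarith
  · -- u₁ limit
    have h := (((tendsto_const_nhds (x := (1:ℝ))).sub
        Real.tendsto_exp_neg_atTop_nhds_zero).add tend_mul_exp_neg).div
        ((tendsto_const_nhds (x := (1:ℝ))).add tend_exp_neg) (by norm_num)
    norm_num at h
    exact Tendsto.congr (fun t => (hu₁ t).symm) h
  · -- u₂ limit
    have h := (((tendsto_const_nhds (x := (1:ℝ))).sub
        Real.tendsto_exp_neg_atTop_nhds_zero).sub tend_mul_exp_neg).div
        ((tendsto_const_nhds (x := (1:ℝ))).sub tend_exp_neg) (by norm_num)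
    norm_num at h
    apply h.congr'
    filter_upwards [eventually_gt_atTop (0:ℝ)] with t ht
    exact (hu₂ t ht.ne').symm
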